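/- arXiv:2308.11435 — 3 statements merged into one kernel-verified Lean document; each statement's English description precedes it below -/
import Mathlib

section
/- Let m be a probability measure on ℝⁿ and H = L²_m(ℝⁿ,ℝⁿ). Define the operator (𝒫(s)X)_x = P(s) X_x + Γ(s) X̄ where X̄ is the m-mean of X, P solves the Riccati equation P' + PF + F*P − P G N⁻¹ G* P + M + M̄ = 0, P(T) = M_T + M̄_T, and Γ solves the Riccati equation Γ' + Γ(F+F̄−GN⁻¹G*P) + (F*+F̄*−PGN⁻¹G*)Γ − ΓGN⁻¹G*Γ + M̄_S + PF̄ + F̄*P = 0, Γ(T) = M̄_S(T). Then 𝒫(s) solves the operator Riccati equation 𝒫' + 𝒫ℱ + ℱ*𝒫 − 𝒫GN⁻¹G*𝒫 + ℳ = 0 with 𝒫(T) = ℳ_T, where (ℱ(s)X)_x = F(s)X_x + F̄(s)X̄, (ℳ(s)X)_x = (M(s)+M̄(s))X_x + M̄_S(s)X̄, and (ℳ_T X)_x = (M_T+M̄_T)X_x + M̄_S(T)X̄, the equation holding in the weak sense (𝒫'(s)X, Y)_H + (ℱ(s)X, 𝒫(s)Y)_H + (ℱ(s)Y, 𝒫(s)X)_H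 − (N⁻¹(s)G*(s)𝒫(s)X, G*(s)𝒫(s)Y)_U + (ℳ(s)X, Y)_H = 0 for all X, Y ∈ H. -/
open MeasureTheory
open scoped RealInnerProductSpace

local postfix:1024 "†" => ContinuousLinearMap.adjoint

section aux

variable {α : Type*} [MeasurableSpace α] {μ : Measure α}
variable {E : Type*} [NormedAddCommGroup E] [InnerProductSpace ℝ E] [CompleteSpace E]

lemma aux_integrable_inner {f g : α → E} (hf : MemLp f 2 μ) (hg : MemLp g 2 μ) :
    Integrable (fun x => ⟪f x, g x⟫) μ := by
  have h := MeasureTheory.L2.integrable_inner (𝕜 := ℝ) (hf.toLp f) (hg.toLp g)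
  refine h.congr ?_
  filter_upwards [hf.coeFn_toLp, hg.coeFn_toLp] with x h1 h2
  rw [h1, h2]

lemma aux_integral_inner_const {f : α → E} (hf : Integrable f μ) (c : E) :
    ∫ x, ⟪f x, c⟫ ∂μ = ⟪∫ x, f x ∂μ, c⟫ := by
  calc ∫ x, ⟪f x, c⟫ ∂μ = ∫ x, ⟪c, f x⟫ ∂μ := by
        congr 1; ext x; exact real_inner_comm _ _
    _ = ⟪c, ∫ x, f x ∂μ⟫ := integral_inner hf c
    _ = _ := real_inner_comm _ _

lemma aux_split4 [IsProbabilityMeasure μ] {f g : α → E} (hf : MemLp f 2 μ)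
    (hg : MemLp g 2 μ) (a b : E) :
    ∫ x, ⟪f x + a, g x + b⟫ ∂μ
      = (∫ x, ⟪f x, g x⟫ ∂μ) + ⟪∫ x, f x ∂μ, b⟫ + ⟪a, ∫ x, g x ∂μ⟫ + ⟪a, b⟫ := by
  have hfi : Integrable f μ := hf.integrable one_le_two
  have hgi : Integrable g μ := hg.integrable one_le_two
  have h1 : Integrable (fun x => ⟪f x, g x⟫) μ := aux_integrable_inner hf hg
  have h2 : Integrable (fun x => ⟪f x, b⟫) μ := by
    refine (hfi.const_inner b).congr (Filter.Eventually.of_forall fun x => ?_)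
    exact real_inner_comm _ _
  have h3 : Integrable (fun x => ⟪a, g x⟫) μ := hgi.const_inner a
  have h4 : Integrable (fun _ : α => ⟪a, b⟫) μ := integrable_const _
  calc ∫ x, ⟪f x + a, g x + b⟫ ∂μ
      = ∫ x, ((⟪f x, g x⟫ + ⟪f x, b⟫) + (⟪a, g x⟫ + ⟪a, b⟫)) ∂μ := by
        congr 1; ext x
        simp only [inner_add_left, inner_add_right]; ring
    _ = (∫ x, ⟪f x, g x⟫ ∂μ) + ⟪∫ x, f x ∂μ, b⟫ + ⟪a, ∫ x, g x ∂μ⟫ + ⟪a, b⟫ := by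
        have h12 : Integrable (fun x => ⟪f x, g x⟫ + ⟪f x, b⟫) μ := h1.add h2
        have h34 : Integrable (fun x => ⟪a, g x⟫ + ⟪a, b⟫) μ := h3.add h4
        have e0 : ∫ x, ((⟪f x, g x⟫ + ⟪f x, b⟫) + (⟪a, g x⟫ + ⟪a, b⟫)) ∂μ
            = (∫ x, (⟪f x, g x⟫ + ⟪f x, b⟫) ∂μ) + ∫ x, (⟪a, g x⟫ + ⟪a, b⟫) ∂μ :=
          integral_add h12 h34
        have e1 : ∫ x, (⟪f x, g x⟫ + ⟪f x, b⟫) ∂μ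
            = (∫ x, ⟪f x, g x⟫ ∂μ) + ∫ x, ⟪f x, b⟫ ∂μ := integral_add h1 h2
        have e2 : ∫ x, (⟪a, g x⟫ + ⟪a, b⟫) ∂μ
            = (∫ x, ⟪a, g x⟫ ∂μ) + ∫ x, (⟪a, b⟫ : ℝ) ∂μ := integral_add h3 h4
        rw [e0, e1, e2, aux_integral_inner_const hfi b, integral_inner hgi a,
          integral_const, probReal_univ, one_smul]
        ring

lemma aux_split2 [IsProbabilityMeasure μ] {f g : α → E} (hf : MemLp f 2 μ)
    (hg : MemLp g 2 μ) (a : E) :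
    ∫ x, ⟪f x + a, g x⟫ ∂μ = (∫ x, ⟪f x, g x⟫ ∂μ) + ⟪a, ∫ x, g x ∂μ⟫ := by
  have h := aux_split4 hf hg a (0 : E)
  simpa using h

end aux

set_option maxHeartbeats 1000000 in
/-- the operator `(𝒫(s)X)_x = P(s)X_x + Γ(s)X̄` on `H = L²_m(ℝⁿ,ℝⁿ)`,
built from the solutions `P`, `Γ` of the two matrix Riccati equations, solves the
operator Riccati equation `𝒫' + 𝒫ℱ + ℱ*𝒫 − 𝒫GN⁻¹G*𝒫 + ℳ = 0`, `𝒫(T) = ℳ_T`, in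
the weak sense `(𝒫'X,Y)_H + (ℱX,𝒫Y)_H + (ℱY,𝒫X)_H − (N⁻¹G*𝒫X, G*𝒫Y)_U + (ℳX,Y)_H = 0`
for all `X, Y ∈ H`. -/
theorem stmt4 {n d : ℕ}
    (m : Measure (EuclideanSpace ℝ (Fin n))) [IsProbabilityMeasure m]
    (T : ℝ)
    (F Fb M Mb MbS P Γ P' Γ' : ℝ → EuclideanSpace ℝ (Fin n) →L[ℝ] EuclideanSpace ℝ (Fin n))
    (MT MbT MbST : EuclideanSpace ℝ (Fin n) →L[ℝ] EuclideanSpace ℝ (Fin n))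
    (G : ℝ → EuclideanSpace ℝ (Fin d) →L[ℝ] EuclideanSpace ℝ (Fin n))
    (N Ninv : ℝ → EuclideanSpace ℝ (Fin d) →L[ℝ] EuclideanSpace ℝ (Fin d))
    (hNinv : ∀ s, N s ∘L Ninv s = 1 ∧ Ninv s ∘L N s = 1)
    (hNinvsym : ∀ s, (Ninv s)† = Ninv s)
    (hPsym : ∀ s, (P s)† = P s) (hΓsym : ∀ s, (Γ s)† = Γ s)
    -- P solves its Riccati equation with P(T) = M_T + M̄_T :
    (hP : ∀ s, HasDerivAt P (P' s) s)
    (hPric : ∀ s, P' s + P s ∘L F s + (F s)† ∘L P s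
        - P s ∘L G s ∘L Ninv s ∘L (G s)† ∘L P s + M s + Mb s = 0)
    (hPT : P T = MT + MbT)
    -- Γ solves its Riccati equation with Γ(T) = M̄_S(T) :
    (hΓ : ∀ s, HasDerivAt Γ (Γ' s) s)
    (hΓric : ∀ s, Γ' s
        + Γ s ∘L (F s + Fb s - G s ∘L Ninv s ∘L (G s)† ∘L P s)
        + ((F s)† + (Fb s)† - P s ∘L G s ∘L Ninv s ∘L (G s)†) ∘L Γ s
        - Γ s ∘L G s ∘L Ninv s ∘L (G s)† ∘L Γ s
        + MbS s + P s ∘L Fb s + (Fb s)† ∘L P s = 0)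
    (hΓT : Γ T = MbST) :
    ∀ (s : ℝ) (X Y : EuclideanSpace ℝ (Fin n) → EuclideanSpace ℝ (Fin n)),
      MemLp X 2 m → MemLp Y 2 m →
      ((∫ x, ⟪P' s (X x) + Γ' s (∫ y, X y ∂m), Y x⟫ ∂m)
        + (∫ x, ⟪F s (X x) + Fb s (∫ y, X y ∂m),
              P s (Y x) + Γ s (∫ y, Y y ∂m)⟫ ∂m)
        + (∫ x, ⟪F s (Y x) + Fb s (∫ y, Y y ∂m),
              P s (X x) + Γ s (∫ y, X y ∂m)⟫ ∂m)
        - (∫ x, ⟪Ninv s ((G s)† (P s (X x) + Γ s (∫ y, X y ∂m))),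
              (G s)† (P s (Y x) + Γ s (∫ y, Y y ∂m))⟫ ∂m)
        + (∫ x, ⟪(M s + Mb s) (X x) + MbS s (∫ y, X y ∂m), Y x⟫ ∂m) = 0)
      ∧ (∫ x, ⟪P T (X x) + Γ T (∫ y, X y ∂m), Y x⟫ ∂m)
          = ∫ x, ⟪(MT + MbT) (X x) + MbST (∫ y, X y ∂m), Y x⟫ ∂m := by
  intro s X Y hX hY
  have hXi : Integrable X m := hX.integrable one_le_two
  have hYi : Integrable Y m := hY.integrable one_le_two
  constructor
  · -- micro inner-product identities
    have sP : ∀ w z : EuclideanSpace ℝ (Fin n), ⟪P s w, z⟫ = ⟪w, P s z⟫ := by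
      intro w z
      nth_rewrite 1 [← hPsym s]
      exact ContinuousLinearMap.adjoint_inner_left _ _ _
    have sΓ : ∀ w z : EuclideanSpace ℝ (Fin n), ⟪Γ s w, z⟫ = ⟪w, Γ s z⟫ := by
      intro w z
      nth_rewrite 1 [← hΓsym s]
      exact ContinuousLinearMap.adjoint_inner_left _ _ _
    have sG : ∀ (w : EuclideanSpace ℝ (Fin d)) (z : EuclideanSpace ℝ (Fin n)),
        ⟪G s w, z⟫ = ⟪w, (G s)† z⟫ := fun w z =>
      (ContinuousLinearMap.adjoint_inner_right (G s) w z).symm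
    -- Riccati identity for P, pointwise
    have ric0 : ∀ u v : EuclideanSpace ℝ (Fin n),
        ⟪P' s u, v⟫ + ⟪F s u, P s v⟫ + ⟪F s v, P s u⟫
          - ⟪Ninv s ((G s)† (P s u)), (G s)† (P s v)⟫ + ⟪(M s + Mb s) u, v⟫ = 0 := by
      intro u v
      have h2 := congrArg (fun (L : EuclideanSpace ℝ (Fin n) →L[ℝ] EuclideanSpace ℝ (Fin n)) =>
        (⟪L u, v⟫ : ℝ)) (hPric s)
      simp only [ContinuousLinearMap.add_apply, ContinuousLinearMap.sub_apply,
        ContinuousLinearMap.coe_comp', Function.comp_apply, ContinuousLinearMap.zero_apply,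
        inner_add_left, inner_sub_left, inner_zero_left] at h2
      have e1 : ⟪P s (F s u), v⟫ = ⟪F s u, P s v⟫ := sP _ _
      have e2 : ⟪(F s)† (P s u), v⟫ = ⟪P s u, F s v⟫ :=
        ContinuousLinearMap.adjoint_inner_left _ _ _
      have e2' : ⟪P s u, F s v⟫ = ⟪F s v, P s u⟫ := real_inner_comm _ _
      have e3 : ⟪P s (G s (Ninv s ((G s)† (P s u)))), v⟫
          = ⟪Ninv s ((G s)† (P s u)), (G s)† (P s v)⟫ := by
        rw [sP, ← sG]
      simp only [ContinuousLinearMap.add_apply, inner_add_left]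
      linarith [h2, e1, e2, e2', e3]
    -- Riccati identity for Γ, at the means
    have ric1 : ∀ u v : EuclideanSpace ℝ (Fin n),
        ⟪Γ' s u, v⟫
        + (⟪F s u, Γ s v⟫ + ⟪Fb s u, P s v⟫ + ⟪Fb s u, Γ s v⟫)
        + (⟪F s v, Γ s u⟫ + ⟪Fb s v, P s u⟫ + ⟪Fb s v, Γ s u⟫)
        - (⟪Ninv s ((G s)† (P s u)), (G s)† (Γ s v)⟫
            + ⟪Ninv s ((G s)† (Γ s u)), (G s)† (P s v)⟫
            + ⟪Ninv s ((G s)† (Γ s u)), (G s)† (Γ s v)⟫)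
        + ⟪MbS s u, v⟫ = 0 := by
      intro u v
      have h2 := congrArg (fun (L : EuclideanSpace ℝ (Fin n) →L[ℝ] EuclideanSpace ℝ (Fin n)) =>
        (⟪L u, v⟫ : ℝ)) (hΓric s)
      simp only [ContinuousLinearMap.add_apply, ContinuousLinearMap.sub_apply,
        ContinuousLinearMap.coe_comp', Function.comp_apply, ContinuousLinearMap.zero_apply,
        map_add, map_sub, inner_add_left, inner_sub_left, inner_zero_left] at h2
      have g1 : ⟪Γ s (F s u), v⟫ = ⟪F s u, Γ s v⟫ := sΓ _ _
      have g2 : ⟪Γ s (Fb s u), v⟫ = ⟪Fb s u, Γ s v⟫ := sΓ _ _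
      have g3 : ⟪Γ s (G s (Ninv s ((G s)† (P s u)))), v⟫
          = ⟪Ninv s ((G s)† (P s u)), (G s)† (Γ s v)⟫ := by rw [sΓ, ← sG]
      have g4 : ⟪(F s)† (Γ s u), v⟫ = ⟪Γ s u, F s v⟫ :=
        ContinuousLinearMap.adjoint_inner_left _ _ _
      have g4' : ⟪Γ s u, F s v⟫ = ⟪F s v, Γ s u⟫ := real_inner_comm _ _
      have g5 : ⟪(Fb s)† (Γ s u), v⟫ = ⟪Γ s u, Fb s v⟫ :=
        ContinuousLinearMap.adjoint_inner_left _ _ _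
      have g5' : ⟪Γ s u, Fb s v⟫ = ⟪Fb s v, Γ s u⟫ := real_inner_comm _ _
      have g6 : ⟪P s (G s (Ninv s ((G s)† (Γ s u)))), v⟫
          = ⟪Ninv s ((G s)† (Γ s u)), (G s)† (P s v)⟫ := by rw [sP, ← sG]
      have g7 : ⟪Γ s (G s (Ninv s ((G s)† (Γ s u)))), v⟫
          = ⟪Ninv s ((G s)† (Γ s u)), (G s)† (Γ s v)⟫ := by rw [sΓ, ← sG]
      have g8 : ⟪P s (Fb s u), v⟫ = ⟪Fb s u, P s v⟫ := sP _ _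
      have g9 : ⟪(Fb s)† (P s u), v⟫ = ⟪P s u, Fb s v⟫ :=
        ContinuousLinearMap.adjoint_inner_left _ _ _
      have g9' : ⟪P s u, Fb s v⟫ = ⟪Fb s v, P s u⟫ := real_inner_comm _ _
      linarith [h2, g1, g2, g3, g4, g4', g5, g5', g6, g7, g8, g9, g9']
    -- abbreviations
    have hFa : ∫ x, F s (X x) ∂m = F s (∫ y, X y ∂m) := (F s).integral_comp_comm hXi
    have hPb : ∫ x, P s (Y x) ∂m = P s (∫ y, Y y ∂m) := (P s).integral_comp_comm hYi
    have hFb' : ∫ x, F s (Y x) ∂m = F s (∫ y, Y y ∂m) := (F s).integral_comp_comm hYi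
    have hPa : ∫ x, P s (X x) ∂m = P s (∫ y, X y ∂m) := (P s).integral_comp_comm hXi
    -- splitting of the five integrals
    have I1 : (∫ x, ⟪P' s (X x) + Γ' s (∫ y, X y ∂m), Y x⟫ ∂m)
        = (∫ x, ⟪P' s (X x), Y x⟫ ∂m) + ⟪Γ' s (∫ y, X y ∂m), ∫ y, Y y ∂m⟫ :=
      aux_split2 ((P' s).comp_memLp' hX) hY _
    have I5 : (∫ x, ⟪(M s + Mb s) (X x) + MbS s (∫ y, X y ∂m), Y x⟫ ∂m)
        = (∫ x, ⟪(M s + Mb s) (X x), Y x⟫ ∂m) + ⟪MbS s (∫ y, X y ∂m), ∫ y, Y y ∂m⟫ :=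
      aux_split2 ((M s + Mb s).comp_memLp' hX) hY _
    have I2 : (∫ x, ⟪F s (X x) + Fb s (∫ y, X y ∂m),
          P s (Y x) + Γ s (∫ y, Y y ∂m)⟫ ∂m)
        = (∫ x, ⟪F s (X x), P s (Y x)⟫ ∂m)
          + ⟪F s (∫ y, X y ∂m), Γ s (∫ y, Y y ∂m)⟫
          + ⟪Fb s (∫ y, X y ∂m), P s (∫ y, Y y ∂m)⟫
          + ⟪Fb s (∫ y, X y ∂m), Γ s (∫ y, Y y ∂m)⟫ := by
      have h := aux_split4 (f := fun x => F s (X x)) (g := fun x => P s (Y x))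
        ((F s).comp_memLp' hX) ((P s).comp_memLp' hY)
        (Fb s (∫ y, X y ∂m)) (Γ s (∫ y, Y y ∂m))
      rw [hFa, hPb] at h
      exact h
    have I3 : (∫ x, ⟪F s (Y x) + Fb s (∫ y, Y y ∂m),
          P s (X x) + Γ s (∫ y, X y ∂m)⟫ ∂m)
        = (∫ x, ⟪F s (Y x), P s (X x)⟫ ∂m)
          + ⟪F s (∫ y, Y y ∂m), Γ s (∫ y, X y ∂m)⟫
          + ⟪Fb s (∫ y, Y y ∂m), P s (∫ y, X y ∂m)⟫
          + ⟪Fb s (∫ y, Y y ∂m), Γ s (∫ y, X y ∂m)⟫ := by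
      have h := aux_split4 (f := fun x => F s (Y x)) (g := fun x => P s (X x))
        ((F s).comp_memLp' hY) ((P s).comp_memLp' hX)
        (Fb s (∫ y, Y y ∂m)) (Γ s (∫ y, X y ∂m))
      rw [hFb', hPa] at h
      exact h
    have memKX : MemLp (fun x => Ninv s ((G s)† (P s (X x)))) 2 m :=
      (Ninv s ∘L (G s)† ∘L P s).comp_memLp' hX
    have memKY : MemLp (fun x => (G s)† (P s (Y x))) 2 m :=
      ((G s)† ∘L P s).comp_memLp' hY
    have hKa : ∫ x, Ninv s ((G s)† (P s (X x))) ∂m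
        = Ninv s ((G s)† (P s (∫ y, X y ∂m))) := by
      have h := (Ninv s ∘L (G s)† ∘L P s).integral_comp_comm hXi
      simpa using h
    have hKb : ∫ x, (G s)† (P s (Y x)) ∂m = (G s)† (P s (∫ y, Y y ∂m)) := by
      have h := ((G s)† ∘L P s).integral_comp_comm hYi
      simpa using h
    have I4 : (∫ x, ⟪Ninv s ((G s)† (P s (X x) + Γ s (∫ y, X y ∂m))),
          (G s)† (P s (Y x) + Γ s (∫ y, Y y ∂m))⟫ ∂m)
        = (∫ x, ⟪Ninv s ((G s)† (P s (X x))), (G s)† (P s (Y x))⟫ ∂m)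
          + ⟪Ninv s ((G s)† (P s (∫ y, X y ∂m))), (G s)† (Γ s (∫ y, Y y ∂m))⟫
          + ⟪Ninv s ((G s)† (Γ s (∫ y, X y ∂m))), (G s)† (P s (∫ y, Y y ∂m))⟫
          + ⟪Ninv s ((G s)† (Γ s (∫ y, X y ∂m))), (G s)† (Γ s (∫ y, Y y ∂m))⟫ := by
      have h := aux_split4 (f := fun x => Ninv s ((G s)† (P s (X x))))
        (g := fun x => (G s)† (P s (Y x))) memKX memKY
        (Ninv s ((G s)† (Γ s (∫ y, X y ∂m)))) ((G s)† (Γ s (∫ y, Y y ∂m)))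
      rw [hKa, hKb] at h
      rw [← h]
      congr 1; ext x
      simp only [map_add]
    -- the L² (pointwise) part vanishes
    have hz : (∫ x, ⟪P' s (X x), Y x⟫ ∂m) + (∫ x, ⟪F s (X x), P s (Y x)⟫ ∂m)
        + (∫ x, ⟪F s (Y x), P s (X x)⟫ ∂m)
        - (∫ x, ⟪Ninv s ((G s)† (P s (X x))), (G s)† (P s (Y x))⟫ ∂m)
        + (∫ x, ⟪(M s + Mb s) (X x), Y x⟫ ∂m) = 0 := by
      have q1 : Integrable (fun x => ⟪P' s (X x), Y x⟫) m :=
        aux_integrable_inner ((P' s).comp_memLp' hX) hY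
      have q2 : Integrable (fun x => ⟪F s (X x), P s (Y x)⟫) m :=
        aux_integrable_inner ((F s).comp_memLp' hX) ((P s).comp_memLp' hY)
      have q3 : Integrable (fun x => ⟪F s (Y x), P s (X x)⟫) m :=
        aux_integrable_inner ((F s).comp_memLp' hY) ((P s).comp_memLp' hX)
      have q4 : Integrable (fun x => ⟪Ninv s ((G s)† (P s (X x))), (G s)† (P s (Y x))⟫) m :=
        aux_integrable_inner memKX memKY
      have q5 : Integrable (fun x => ⟪(M s + Mb s) (X x), Y x⟫) m :=
        aux_integrable_inner ((M s + Mb s).comp_memLp' hX) hY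
      have q12 : Integrable (fun x => ⟪P' s (X x), Y x⟫ + ⟪F s (X x), P s (Y x)⟫) m :=
        q1.add q2
      have q123 : Integrable (fun x => ⟪P' s (X x), Y x⟫ + ⟪F s (X x), P s (Y x)⟫
          + ⟪F s (Y x), P s (X x)⟫) m := q12.add q3
      have q1234 : Integrable (fun x => ⟪P' s (X x), Y x⟫ + ⟪F s (X x), P s (Y x)⟫
          + ⟪F s (Y x), P s (X x)⟫
          - ⟪Ninv s ((G s)† (P s (X x))), (G s)† (P s (Y x))⟫) m := q123.sub q4
      have e1 : ∫ x, (⟪P' s (X x), Y x⟫ + ⟪F s (X x), P s (Y x)⟫) ∂m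
          = (∫ x, ⟪P' s (X x), Y x⟫ ∂m) + ∫ x, ⟪F s (X x), P s (Y x)⟫ ∂m :=
        integral_add q1 q2
      have e2 : ∫ x, (⟪P' s (X x), Y x⟫ + ⟪F s (X x), P s (Y x)⟫
            + ⟪F s (Y x), P s (X x)⟫) ∂m
          = (∫ x, (⟪P' s (X x), Y x⟫ + ⟪F s (X x), P s (Y x)⟫) ∂m)
            + ∫ x, ⟪F s (Y x), P s (X x)⟫ ∂m := integral_add q12 q3
      have e3 : ∫ x, (⟪P' s (X x), Y x⟫ + ⟪F s (X x), P s (Y x)⟫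
            + ⟪F s (Y x), P s (X x)⟫
            - ⟪Ninv s ((G s)† (P s (X x))), (G s)† (P s (Y x))⟫) ∂m
          = (∫ x, (⟪P' s (X x), Y x⟫ + ⟪F s (X x), P s (Y x)⟫
            + ⟪F s (Y x), P s (X x)⟫) ∂m)
            - ∫ x, ⟪Ninv s ((G s)† (P s (X x))), (G s)† (P s (Y x))⟫ ∂m :=
        integral_sub q123 q4
      have e4 : ∫ x, (⟪P' s (X x), Y x⟫ + ⟪F s (X x), P s (Y x)⟫
            + ⟪F s (Y x), P s (X x)⟫
            - ⟪Ninv s ((G s)† (P s (X x))), (G s)† (P s (Y x))⟫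
            + ⟪(M s + Mb s) (X x), Y x⟫) ∂m
          = (∫ x, (⟪P' s (X x), Y x⟫ + ⟪F s (X x), P s (Y x)⟫
            + ⟪F s (Y x), P s (X x)⟫
            - ⟪Ninv s ((G s)† (P s (X x))), (G s)† (P s (Y x))⟫) ∂m)
            + ∫ x, ⟪(M s + Mb s) (X x), Y x⟫ ∂m := integral_add q1234 q5
      rw [← e1, ← e2, ← e3, ← e4]
      have : (fun x => ⟪P' s (X x), Y x⟫ + ⟪F s (X x), P s (Y x)⟫
          + ⟪F s (Y x), P s (X x)⟫
          - ⟪Ninv s ((G s)† (P s (X x))), (G s)† (P s (Y x))⟫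
          + ⟪(M s + Mb s) (X x), Y x⟫) = fun _ => (0 : ℝ) := by
        funext x; exact ric0 (X x) (Y x)
      rw [this, integral_zero]
    rw [I1, I2, I3, I4, I5]
    have hm := ric1 (∫ y, X y ∂m) (∫ y, Y y ∂m)
    linarith [hz, hm]
  · rw [hPT, hΓT]
end

section
/- Let π, m be probability measures on ℝⁿ such that π is absolutely continuous with respect to m, and define Φ(m) = KL(π|m). Then the functional derivative of Φ at m is (d/dm)Φ(m)(x) = −(dπ/dm)(x), i.e., for m' with π ≪ m + λ(m'−m) for all λ ∈ [0,1] and suitable integrability, Φ(m') − Φ(m) = −∫₀¹ ∫ (dπ/d(m+λ(m'−m)))(x) (dm'(x) − dm(x)) dλ. -/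
open MeasureTheory
open scoped ENNReal

section Aux

variable {α : Type*} [MeasurableSpace α]

lemma aux_mix_eq_withDensity {π m m' : Measure α} [SigmaFinite π] [SigmaFinite m] [SigmaFinite m']
    (hm : m ≪ π) (hm' : m' ≪ π) (a b : ℝ≥0∞) :
    a • m + b • m' = π.withDensity (fun x => a * m.rnDeriv π x + b * m'.rnDeriv π x) := by
  have h1 : π.withDensity (fun x => a * m.rnDeriv π x + b * m'.rnDeriv π x)
      = π.withDensity (a • m.rnDeriv π) + π.withDensity (b • m'.rnDeriv π) :=
    withDensity_add_left ((Measure.measurable_rnDeriv m π).const_mul a) _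
  rw [h1, withDensity_smul a (Measure.measurable_rnDeriv m π),
    withDensity_smul b (Measure.measurable_rnDeriv m' π),
    Measure.withDensity_rnDeriv_eq m π hm, Measure.withDensity_rnDeriv_eq m' π hm']

end Aux

/-- for `Φ(m) = KL(π|m) = ∫ ln(dπ/dm) dπ`, the functional derivative
is `−dπ/dm`, i.e. (with densities bounded above and away from zero)
`Φ(m') − Φ(m) = −∫₀¹ ∫ (dπ/d(m+λ(m'−m))) d(m'−m) dλ`. -/
theorem stmt12 {n : ℕ}
    (π m m' : Measure (EuclideanSpace ℝ (Fin n)))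
    [IsProbabilityMeasure π] [IsProbabilityMeasure m] [IsProbabilityMeasure m']
    (hπm : π ≪ m) (hπm' : π ≪ m')
    (hm : m ≪ π) (hm' : m' ≪ π)
    (c C : ℝ≥0∞) (hc : 0 < c) (hC : C < ⊤)
    (hmd : ∀ᵐ x ∂π, c ≤ m.rnDeriv π x ∧ m.rnDeriv π x ≤ C)
    (hm'd : ∀ᵐ x ∂π, c ≤ m'.rnDeriv π x ∧ m'.rnDeriv π x ≤ C) :
    (∫ x, Real.log ((π.rnDeriv m' x).toReal) ∂π)
      - (∫ x, Real.log ((π.rnDeriv m x).toReal) ∂π)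
    = -∫ l in (0:ℝ)..1,
        ((∫ x, ((π.rnDeriv (ENNReal.ofReal (1 - l) • m + ENNReal.ofReal l • m') x).toReal) ∂m')
          - ∫ x, ((π.rnDeriv (ENNReal.ofReal (1 - l) • m + ENNReal.ofReal l • m') x).toReal) ∂m) := by
  classical
  set F : EuclideanSpace ℝ (Fin n) → ℝ := fun x => (m.rnDeriv π x).toReal with hFdef
  set G : EuclideanSpace ℝ (Fin n) → ℝ := fun x => (m'.rnDeriv π x).toReal with hGdef
  obtain ⟨x₀, hx₀⟩ := hmd.exists
  have hcC : c ≤ C := hx₀.1.trans hx₀.2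
  have hcT : c ≠ ⊤ := (hcC.trans_lt hC).ne
  set cr := c.toReal with hcrdef
  set Cr := C.toReal with hCrdef
  have hcr : 0 < cr := ENNReal.toReal_pos hc.ne' hcT
  have hCrge : cr ≤ Cr := ENNReal.toReal_mono hC.ne hcC
  have hFmeas : Measurable F := (Measure.measurable_rnDeriv m π).ennreal_toReal
  have hGmeas : Measurable G := (Measure.measurable_rnDeriv m' π).ennreal_toReal
  have hFb : ∀ᵐ x ∂π, cr ≤ F x ∧ F x ≤ Cr := by
    filter_upwards [hmd] with x hx
    exact ⟨ENNReal.toReal_mono (hx.2.trans_lt hC).ne hx.1, ENNReal.toReal_mono hC.ne hx.2⟩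
  have hGb : ∀ᵐ x ∂π, cr ≤ G x ∧ G x ≤ Cr := by
    filter_upwards [hm'd] with x hx
    exact ⟨ENNReal.toReal_mono (hx.2.trans_lt hC).ne hx.1, ENNReal.toReal_mono hC.ne hx.2⟩
  set K : ℝ → EuclideanSpace ℝ (Fin n) → ℝ :=
    fun l x => (G x - F x) / ((1 - l) * F x + l * G x) with hKdef
  -- Step A : the inner integral for each `l ∈ (0,1]`
  have hkey : ∀ l ∈ Set.Ioc (0:ℝ) 1,
      ((∫ x, ((π.rnDeriv (ENNReal.ofReal (1 - l) • m + ENNReal.ofReal l • m') x).toReal) ∂m')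
        - ∫ x, ((π.rnDeriv (ENNReal.ofReal (1 - l) • m + ENNReal.ofReal l • m') x).toReal) ∂m)
      = ∫ x, K l x ∂π := by
    intro l hl
    set ν := ENNReal.ofReal (1 - l) • m + ENNReal.ofReal l • m' with hνdef
    have hb0 : ENNReal.ofReal l ≠ 0 := by
      simp only [ne_eq, ENNReal.ofReal_eq_zero, not_le]; exact hl.1
    have hνwd : ν = π.withDensity
        (fun x => ENNReal.ofReal (1 - l) * m.rnDeriv π x + ENNReal.ofReal l * m'.rnDeriv π x) :=
      aux_mix_eq_withDensity hm hm' _ _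
    haveI : IsFiniteMeasure ν := by
      constructor
      rw [hνdef]
      simp only [Measure.coe_add, Measure.coe_smul, Pi.add_apply, Pi.smul_apply, smul_eq_mul]
      exact ENNReal.add_lt_top.2 ⟨ENNReal.mul_lt_top ENNReal.ofReal_lt_top (measure_lt_top m _),
        ENNReal.mul_lt_top ENNReal.ofReal_lt_top (measure_lt_top m' _)⟩
    have hνπ : ν ≪ π := by
      rw [hνwd]; exact withDensity_absolutelyContinuous _ _
    have hπν : π ≪ ν := by
      refine hπm'.trans ?_
      intro s hs
      rw [hνdef] at hs
      simp only [Measure.coe_add, Measure.coe_smul, Pi.add_apply, Pi.smul_apply,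
        smul_eq_mul, add_eq_zero, mul_eq_zero] at hs
      rcases hs.2 with h | h
      · exact absurd h hb0
      · exact h
    have hdν : ν.rnDeriv π =ᵐ[π]
        fun x => ENNReal.ofReal (1 - l) * m.rnDeriv π x + ENNReal.ofReal l * m'.rnDeriv π x := by
      rw [hνwd]
      exact Measure.rnDeriv_withDensity π
        (((Measure.measurable_rnDeriv m π).const_mul _).add
          ((Measure.measurable_rnDeriv m' π).const_mul _))
    have hinv : π.rnDeriv ν =ᵐ[π] fun x => (ν.rnDeriv π x)⁻¹ := (Measure.inv_rnDeriv' hπν).symm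
    have hu : ∀ᵐ x ∂π, (π.rnDeriv ν x).toReal = ((1 - l) * F x + l * G x)⁻¹
        ∧ cr ≤ (1 - l) * F x + l * G x := by
      filter_upwards [hinv, hdν, hmd, hm'd, hFb, hGb] with x h1 h2 h3 h4 h5 h6
      have hto : (ν.rnDeriv π x).toReal = (1 - l) * F x + l * G x := by
        rw [h2, ENNReal.toReal_add
            (ENNReal.mul_ne_top ENNReal.ofReal_ne_top (h3.2.trans_lt hC).ne)
            (ENNReal.mul_ne_top ENNReal.ofReal_ne_top (h4.2.trans_lt hC).ne),
          ENNReal.toReal_mul, ENNReal.toReal_mul, ENNReal.toReal_ofReal (by linarith [hl.2]),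
          ENNReal.toReal_ofReal hl.1.le]
      refine ⟨?_, ?_⟩
      · rw [h1, ENNReal.toReal_inv, hto]
      · nlinarith [hl.1, hl.2, h5.1, h6.1]
    have humeas : Measurable fun x => (π.rnDeriv ν x).toReal :=
      (Measure.measurable_rnDeriv π ν).ennreal_toReal
    have hIG : Integrable (fun x => G x * (π.rnDeriv ν x).toReal) π := by
      refine Integrable.mono' (integrable_const (Cr * cr⁻¹))
        ((hGmeas.mul humeas).aestronglyMeasurable) ?_
      filter_upwards [hu, hGb] with x hx hg
      have hd0 : 0 < (1 - l) * F x + l * G x := lt_of_lt_of_le hcr hx.2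
      rw [Real.norm_eq_abs, abs_mul, hx.1, abs_of_nonneg (inv_nonneg.2 hd0.le)]
      have hG0 : 0 ≤ G x := le_trans hcr.le hg.1
      rw [abs_of_nonneg hG0]
      exact mul_le_mul hg.2 (inv_anti₀ hcr hx.2) (inv_nonneg.2 hd0.le)
        (le_trans hcr.le (hg.1.trans hg.2))
    have hIF : Integrable (fun x => F x * (π.rnDeriv ν x).toReal) π := by
      refine Integrable.mono' (integrable_const (Cr * cr⁻¹))
        ((hFmeas.mul humeas).aestronglyMeasurable) ?_
      filter_upwards [hu, hFb] with x hx hg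
      have hd0 : 0 < (1 - l) * F x + l * G x := lt_of_lt_of_le hcr hx.2
      rw [Real.norm_eq_abs, abs_mul, hx.1, abs_of_nonneg (inv_nonneg.2 hd0.le)]
      have hG0 : 0 ≤ F x := le_trans hcr.le hg.1
      rw [abs_of_nonneg hG0]
      exact mul_le_mul hg.2 (inv_anti₀ hcr hx.2) (inv_nonneg.2 hd0.le)
        (le_trans hcr.le (hg.1.trans hg.2))
    have h1 : ∫ x, (π.rnDeriv ν x).toReal ∂m'
        = ∫ x, G x * (π.rnDeriv ν x).toReal ∂π := by
      haveI := Measure.haveLebesgueDecomposition_of_sigmaFinite m' π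
      rw [← MeasureTheory.integral_rnDeriv_smul hm' (f := fun x => (π.rnDeriv ν x).toReal)]
      simp [hGdef, smul_eq_mul]
    have h2 : ∫ x, (π.rnDeriv ν x).toReal ∂m
        = ∫ x, F x * (π.rnDeriv ν x).toReal ∂π := by
      haveI := Measure.haveLebesgueDecomposition_of_sigmaFinite m π
      rw [← MeasureTheory.integral_rnDeriv_smul hm (f := fun x => (π.rnDeriv ν x).toReal)]
      simp [hFdef, smul_eq_mul]
    rw [h1, h2, ← integral_sub hIG hIF]
    apply integral_congr_ae
    filter_upwards [hu] with x hx
    rw [hKdef]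
    simp only
    rw [hx.1, div_eq_mul_inv]
    ring
  -- Step B : pointwise computation of the interval integral of `K · x`
  have hpt : ∀ x, cr ≤ F x → F x ≤ Cr → cr ≤ G x → G x ≤ Cr →
      (∫ l in (0:ℝ)..1, K l x) = Real.log (G x) - Real.log (F x) := by
    intro x h1 h2 h3 h4
    have hderiv : ∀ t ∈ Set.uIcc (0:ℝ) 1,
        HasDerivAt (fun l => Real.log ((1 - l) * F x + l * G x)) (K t x) t := by
      intro t ht
      rw [Set.uIcc_of_le zero_le_one] at ht
      have hpos : 0 < (1 - t) * F x + t * G x := by nlinarith [ht.1, ht.2]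
      have hd1 : HasDerivAt (fun l : ℝ => (1 - l) * F x + l * G x) (G x - F x) t := by
        have h := (((hasDerivAt_id t).const_sub 1).mul_const (F x)).add
          ((hasDerivAt_id t).mul_const (G x))
        exact h.congr_deriv (by ring)
      have := hd1.log hpos.ne'
      exact this
    have hcont : ContinuousOn (fun t => K t x) (Set.uIcc (0:ℝ) 1) := by
      apply ContinuousOn.div continuousOn_const
      · fun_prop
      · intro t ht
        rw [Set.uIcc_of_le zero_le_one] at ht
        nlinarith [ht.1, ht.2]
    rw [intervalIntegral.integral_eq_sub_of_hasDerivAt hderiv hcont.intervalIntegrable]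
    norm_num
  -- Step C : Fubini
  haveI : IsFiniteMeasure (volume.restrict (Set.Ioc (0:ℝ) 1)) := by
    constructor
    rw [Measure.restrict_apply_univ, Real.volume_Ioc]
    exact ENNReal.ofReal_lt_top
  have hswap : (∫ l in (0:ℝ)..1, (∫ x, K l x ∂π))
      = ∫ x, (∫ l in (0:ℝ)..1, K l x) ∂π := by
    have hKmeas : Measurable (Function.uncurry K) := by
      apply Measurable.div
      · fun_prop
      · fun_prop
    have hint : Integrable (Function.uncurry K)
        ((volume.restrict (Set.Ioc (0:ℝ) 1)).prod π) := by
      refine Integrable.mono' (integrable_const (2 * Cr / cr))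
        hKmeas.aestronglyMeasurable ?_
      have hae1 : ∀ᵐ p ∂((volume.restrict (Set.Ioc (0:ℝ) 1)).prod π),
          p.1 ∈ Set.Ioc (0:ℝ) 1 :=
        Measure.quasiMeasurePreserving_fst.ae (ae_restrict_mem measurableSet_Ioc)
      have hae2 : ∀ᵐ p ∂((volume.restrict (Set.Ioc (0:ℝ) 1)).prod π),
          (cr ≤ F p.2 ∧ F p.2 ≤ Cr) ∧ (cr ≤ G p.2 ∧ G p.2 ≤ Cr) :=
        Measure.quasiMeasurePreserving_snd.ae (hFb.and hGb)
      filter_upwards [hae1, hae2] with p hp hb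
      have hd0 : cr ≤ (1 - p.1) * F p.2 + p.1 * G p.2 := by
        nlinarith [hp.1, hp.2, hb.1.1, hb.2.1]
      have hnum : |G p.2 - F p.2| ≤ 2 * Cr := by
        rw [abs_le]
        constructor <;> nlinarith [hb.1.1, hb.1.2, hb.2.1, hb.2.2, hcr]
      rw [Function.uncurry, Real.norm_eq_abs, hKdef]
      simp only
      rw [abs_div, abs_of_nonneg (le_trans hcr.le hd0)]
      exact div_le_div₀ (by nlinarith [hcr, hCrge]) hnum hcr hd0
    rw [intervalIntegral.integral_of_le zero_le_one,
      MeasureTheory.integral_integral_swap hint]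
    apply integral_congr_ae
    filter_upwards [] with x
    rw [intervalIntegral.integral_of_le zero_le_one]
  -- integrability of logs
  have hlogbound : ∀ y : ℝ, cr ≤ y → y ≤ Cr → |Real.log y| ≤ |Real.log cr| + |Real.log Cr| := by
    intro y hy1 hy2
    have hl1 : Real.log cr ≤ Real.log y := Real.log_le_log hcr hy1
    have hl2 : Real.log y ≤ Real.log Cr := Real.log_le_log (lt_of_lt_of_le hcr hy1) hy2
    rw [abs_le]
    constructor
    · have := neg_abs_le (Real.log cr)
      have h2 := abs_nonneg (Real.log Cr)
      linarith
    · have := le_abs_self (Real.log Cr)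
      have h2 := abs_nonneg (Real.log cr)
      linarith
  have hlogF : Integrable (fun x => Real.log (F x)) π := by
    refine Integrable.mono' (integrable_const (|Real.log cr| + |Real.log Cr|))
      (Real.measurable_log.comp hFmeas).aestronglyMeasurable ?_
    filter_upwards [hFb] with x hx
    exact hlogbound _ hx.1 hx.2
  have hlogG : Integrable (fun x => Real.log (G x)) π := by
    refine Integrable.mono' (integrable_const (|Real.log cr| + |Real.log Cr|))
      (Real.measurable_log.comp hGmeas).aestronglyMeasurable ?_
    filter_upwards [hGb] with x hx
    exact hlogbound _ hx.1 hx.2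
  -- LHS transformation
  have hL1 : ∫ x, Real.log ((π.rnDeriv m' x).toReal) ∂π = - ∫ x, Real.log (G x) ∂π := by
    rw [← integral_neg]
    apply integral_congr_ae
    filter_upwards [Measure.inv_rnDeriv' hπm'] with x hx
    rw [← hx]
    simp only [Pi.inv_apply, ENNReal.toReal_inv, Real.log_inv, hGdef]
  have hL2 : ∫ x, Real.log ((π.rnDeriv m x).toReal) ∂π = - ∫ x, Real.log (F x) ∂π := by
    rw [← integral_neg]
    apply integral_congr_ae
    filter_upwards [Measure.inv_rnDeriv' hπm] with x hx
    rw [← hx]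
    simp only [Pi.inv_apply, ENNReal.toReal_inv, Real.log_inv, hFdef]
  -- RHS transformation
  have hR : (∫ l in (0:ℝ)..1,
        ((∫ x, ((π.rnDeriv (ENNReal.ofReal (1 - l) • m + ENNReal.ofReal l • m') x).toReal) ∂m')
          - ∫ x, ((π.rnDeriv (ENNReal.ofReal (1 - l) • m + ENNReal.ofReal l • m') x).toReal) ∂m))
      = ∫ l in (0:ℝ)..1, (∫ x, K l x ∂π) := by
    rw [intervalIntegral.integral_of_le zero_le_one,
      intervalIntegral.integral_of_le zero_le_one]
    apply integral_congr_ae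
    filter_upwards [ae_restrict_mem measurableSet_Ioc] with l hl
    exact hkey l hl
  have hfin : ∫ x, (∫ l in (0:ℝ)..1, K l x) ∂π
      = (∫ x, Real.log (G x) ∂π) - ∫ x, Real.log (F x) ∂π := by
    rw [← integral_sub hlogG hlogF]
    apply integral_congr_ae
    filter_upwards [hFb, hGb] with x h1 h2
    exact hpt x h1.1 h1.2 h2.1 h2.2
  rw [hL1, hL2, hR, hswap, hfin]
  ring
end

section
/- Let Ψ_{F,P}(s,t) and Ψ_{F,Σ}(s,t) be the evolution operators on ℝⁿ associated with F(s) − G(s)N⁻¹(s)G*(s)P(s) and F(s)+F̄(s)−G(s)N⁻¹(s)G*(s)Σ(s) respectively, where Σ = P + Γ. Then the evolution operator Φ_{ℱ,𝒫}(s,t) on H = L²_m(ℝⁿ,ℝⁿ) associated with ℱ(s) − G(s)N⁻¹(s)G*(s)𝒫(s), where (ℱX)_x = FX_x + F̄X̄ and (𝒫X)_x = PX_x + ΓX̄, satisfies (Φ_{ℱ,𝒫}(s,t)X)_x = Ψ_{F,P}(s,t)X_x + (Ψ_{F,Σ}(s,t) − Ψ_{F,P}(s,t))X̄. -/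
open MeasureTheory
open scoped RealInnerProductSpace

local postfix:1024 "†" => ContinuousLinearMap.adjoint

/-- with `Ψ_{F,P}`, `Ψ_{F,Σ}` the evolution operators on `ℝⁿ` of
`F − GN⁻¹G*P` and `F + F̄ − GN⁻¹G*Σ` (`Σ = P + Γ`), the map
`(X,x) ↦ Ψ_{F,P}(s,t)X_x + (Ψ_{F,Σ}(s,t) − Ψ_{F,P}(s,t))X̄` is the evolution
operator `Φ_{ℱ,𝒫}(s,t)` on `H = L²_m` of `ℱ − GN⁻¹G*𝒫`: it equals `X` at `s = t`,
its `m`-mean is `Ψ_{F,Σ}(s,t)X̄`, and it solves the `H`-valued ODE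
`Y' = ℱY − GN⁻¹G*𝒫Y`, i.e. pointwise
`Y_x' = F Y_x + F̄ Ȳ − GN⁻¹G*(P Y_x + Γ Ȳ)`. -/
theorem stmt15 {n d : ℕ}
    (m : Measure (EuclideanSpace ℝ (Fin n))) [IsProbabilityMeasure m]
    (F Fb P Γ : ℝ → EuclideanSpace ℝ (Fin n) →L[ℝ] EuclideanSpace ℝ (Fin n))
    (G : ℝ → EuclideanSpace ℝ (Fin d) →L[ℝ] EuclideanSpace ℝ (Fin n))
    (Ninv : ℝ → EuclideanSpace ℝ (Fin d) →L[ℝ] EuclideanSpace ℝ (Fin d))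
    (Ψ1 Ψ2 : ℝ → ℝ → EuclideanSpace ℝ (Fin n) →L[ℝ] EuclideanSpace ℝ (Fin n))
    (hΨ1 : ∀ t s, HasDerivAt (fun r => Ψ1 r t)
        ((F s - G s ∘L Ninv s ∘L (G s)† ∘L P s) ∘L Ψ1 s t) s)
    (hΨ1id : ∀ r, Ψ1 r r = 1)
    (hΨ2 : ∀ t s, HasDerivAt (fun r => Ψ2 r t)
        ((F s + Fb s - G s ∘L Ninv s ∘L (G s)† ∘L (P s + Γ s)) ∘L Ψ2 s t) s)
    (hΨ2id : ∀ r, Ψ2 r r = 1)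
    (t : ℝ) (X : EuclideanSpace ℝ (Fin n) → EuclideanSpace ℝ (Fin n))
    (hX : Integrable X m) :
    (∀ x, Ψ1 t t (X x) + (Ψ2 t t - Ψ1 t t) (∫ y, X y ∂m) = X x) ∧
    (∀ s, (∫ x, (Ψ1 s t (X x) + (Ψ2 s t - Ψ1 s t) (∫ y, X y ∂m)) ∂m)
        = Ψ2 s t (∫ y, X y ∂m)) ∧
    (∀ x s, HasDerivAt
      (fun r => Ψ1 r t (X x) + (Ψ2 r t - Ψ1 r t) (∫ y, X y ∂m))
      (F s (Ψ1 s t (X x) + (Ψ2 s t - Ψ1 s t) (∫ y, X y ∂m))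
        + Fb s (Ψ2 s t (∫ y, X y ∂m))
        - (G s ∘L Ninv s ∘L (G s)†)
            (P s (Ψ1 s t (X x) + (Ψ2 s t - Ψ1 s t) (∫ y, X y ∂m))
              + Γ s (Ψ2 s t (∫ y, X y ∂m)))) s) := by

  constructor
  · intro x
    simp [hΨ1id, hΨ2id]
  constructor
  · intro s
    have h1 : Integrable (fun x => Ψ1 s t (X x)) m := (Ψ1 s t).integrable_comp hX
    rw [integral_add h1 (integrable_const _), integral_const,
      ContinuousLinearMap.integral_comp_comm _ hX]
    simp [ContinuousLinearMap.sub_apply]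
  · intro x s
    have hb : HasDerivAt (fun r => Ψ1 r t (X x) + (Ψ2 r t - Ψ1 r t) (∫ y, X y ∂m))
        (((F s - G s ∘L Ninv s ∘L (G s)† ∘L P s) ∘L Ψ1 s t) (X x)
          + (((F s + Fb s - G s ∘L Ninv s ∘L (G s)† ∘L (P s + Γ s)) ∘L Ψ2 s t)
              - ((F s - G s ∘L Ninv s ∘L (G s)† ∘L P s) ∘L Ψ1 s t)) (∫ y, X y ∂m)) s := by
      have d1 := ((hΨ1 t s).clm_apply (hasDerivAt_const s (X x)))
      have d2 := (((hΨ2 t s).sub (hΨ1 t s)).clm_apply (hasDerivAt_const s (∫ y, X y ∂m)))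
      simpa [Pi.add_def] using d1.add d2
    convert hb using 1
    simp only [ContinuousLinearMap.sub_apply, ContinuousLinearMap.add_apply,
      ContinuousLinearMap.comp_apply, map_add, map_sub]
    abel
end
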